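/- Let G be a non-elementary hyperbolic group with growth rate λ, Coornaert bounds λ^r ≤ |B(r)| ≤ α·λ^r, and finitely many cone types. Let E be the set of essential elements. Then there exists γ > 0 (depending only on G and A) such that for every essential element g, every r ≥ 0 and every e ≥ 1: |{u ∈ T_g ∩ A(r,e) : gu ∈ E}| ≥ γ·λ^r, where A(r,e) = {u : r−e ≤ |u| ≤ r} is the annulus. -/

import Mathlib

open Filter Set

/-- Word length of `g` with respect to the symmetrized generating set `S ∪ S⁻¹`. -/
noncomputable def wordLength {G : Type*} [Group G] (S : Set G) (g : G) : ℕ :=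
  sInf {n | ∃ l : List G, l.length = n ∧ (∀ x ∈ l, x ∈ S ∪ S⁻¹) ∧ l.prod = g}

/-- The ball of radius `r` in the word metric. -/
noncomputable def wordBall {G : Type*} [Group G] (S : Set G) (r : ℕ) : Set G :=
  {g | wordLength S g ≤ r}

/-- The annulus `A(r,e) = {u : r - e ≤ |u| ≤ r}`. -/
noncomputable def wordAnn {G : Type*} [Group G] (S : Set G) (r e : ℕ) : Set G :=
  {g | r - e ≤ wordLength S g ∧ wordLength S g ≤ r}

/-- The cone type of `g`. -/
noncomputable def coneType {G : Type*} [Group G] (S : Set G) (g : G) : Set G :=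
  {u | wordLength S (g * u) = wordLength S g + wordLength S u}

/-- `g` is essential: its cone type satisfies `|T_g ∩ B(s)| ≥ a·λ^s` for arbitrarily large `s`. -/
def Essential {G : Type*} [Group G] (S : Set G) (lam : ℝ) (g : G) : Prop :=
  ∃ a > (0 : ℝ), ∀ r : ℕ, ∃ s ≥ r, a * lam ^ s ≤ ((coneType S g ∩ wordBall S s).ncard : ℝ)

section MainHelpers

section Helpers
variable {G : Type*} [Group G] {S : Finset G}

lemma wordSet_nonempty (hgen : Subgroup.closure (S : Set G) = ⊤) (g : G) :
    {n | ∃ l : List G, l.length = n ∧ (∀ x ∈ l, x ∈ (S : Set G) ∪ (S : Set G)⁻¹) ∧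
      l.prod = g}.Nonempty := by
  have hg : g ∈ (Subgroup.closure (S : Set G)).toSubmonoid := by
    rw [hgen]; exact Subgroup.mem_top g
  rw [Subgroup.closure_toSubmonoid] at hg
  obtain ⟨l, hl, hp⟩ := Submonoid.exists_list_of_mem_closure hg
  exact ⟨l.length, l, rfl, hl, hp⟩

lemma wordLength_spec (hgen : Subgroup.closure (S : Set G) = ⊤) (g : G) :
    ∃ l : List G, l.length = wordLength (S : Set G) g ∧
      (∀ x ∈ l, x ∈ (S : Set G) ∪ (S : Set G)⁻¹) ∧ l.prod = g :=
  Nat.sInf_mem (wordSet_nonempty hgen g)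

lemma wordLength_le {g : G} {l : List G}
    (hm : ∀ x ∈ l, x ∈ (S : Set G) ∪ (S : Set G)⁻¹) (hp : l.prod = g) :
    wordLength (S : Set G) g ≤ l.length :=
  Nat.sInf_le ⟨l, rfl, hm, hp⟩

lemma wordLength_one : wordLength (S : Set G) 1 = 0 :=
  Nat.le_zero.mp (wordLength_le (l := []) (by simp) (by simp))

lemma mem_symm_inv {x : G} (hx : x ∈ (S : Set G) ∪ (S : Set G)⁻¹) :
    x⁻¹ ∈ (S : Set G) ∪ (S : Set G)⁻¹ := by
  rcases hx with h | h
  · exact Or.inr (by simpa [Set.mem_inv] using h)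
  · exact Or.inl (by simpa [Set.mem_inv] using h)

lemma wordLength_inv_le (hgen : Subgroup.closure (S : Set G) = ⊤) (g : G) :
    wordLength (S : Set G) g⁻¹ ≤ wordLength (S : Set G) g := by
  obtain ⟨l, hlen, hm, hp⟩ := wordLength_spec hgen g
  have : ((l.reverse.map (·⁻¹)).prod : G) = g⁻¹ := by
    rw [← hp]; simp [List.prod_reverse_noncomm]
  calc wordLength (S : Set G) g⁻¹ ≤ (l.reverse.map (·⁻¹)).length :=
        wordLength_le (by
          intro x hx
          simp only [List.mem_map, List.mem_reverse] at hx
          obtain ⟨y, hy, rfl⟩ := hx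
          exact mem_symm_inv (hm y hy)) this
    _ = wordLength (S : Set G) g := by simp [hlen]

lemma wordLength_inv (hgen : Subgroup.closure (S : Set G) = ⊤) (g : G) :
    wordLength (S : Set G) g⁻¹ = wordLength (S : Set G) g :=
  le_antisymm (wordLength_inv_le hgen g) (by
    simpa using wordLength_inv_le hgen g⁻¹)

lemma wordLength_mul_le (hgen : Subgroup.closure (S : Set G) = ⊤) (g h : G) :
    wordLength (S : Set G) (g * h) ≤ wordLength (S : Set G) g + wordLength (S : Set G) h := by
  obtain ⟨l₁, hlen₁, hm₁, hp₁⟩ := wordLength_spec hgen g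
  obtain ⟨l₂, hlen₂, hm₂, hp₂⟩ := wordLength_spec hgen h
  calc wordLength (S : Set G) (g * h) ≤ (l₁ ++ l₂).length :=
        wordLength_le (by
          intro x hx
          rcases List.mem_append.mp hx with h' | h'
          exacts [hm₁ x h', hm₂ x h']) (by simp [hp₁, hp₂])
    _ = _ := by simp [hlen₁, hlen₂]

end Helpers


section ListFinite
variable {G : Type*}

lemma finite_lists (K : Set G) (hK : K.Finite) (n : ℕ) :
    {l : List G | l.length ≤ n ∧ ∀ x ∈ l, x ∈ K}.Finite := by
  induction n with
  | zero =>
      apply Set.Finite.subset (Set.finite_singleton ([] : List G))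
      rintro l ⟨hl, -⟩
      simp [List.length_eq_zero_iff.mp (Nat.le_zero.mp hl)]
  | succ n ih =>
      apply Set.Finite.subset (((hK.image2 List.cons ih).insert ([] : List G)))
      rintro l ⟨hl, hm⟩
      cases l with
      | nil => exact Set.mem_insert _ _
      | cons a t =>
          refine Set.mem_insert_of_mem _ (Set.mem_image2_of_mem (hm a (by simp)) ⟨?_, ?_⟩)
          · simpa using Nat.succ_le_succ_iff.mp hl
          · exact fun x hx => hm x (List.mem_cons_of_mem a hx)

end ListFinite


section Helpers2
variable {G : Type*} [Group G] {S : Finset G}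

variable {G : Type*} [Group G] {S : Finset G}
lemma wordBall_finite (hgen : Subgroup.closure (S : Set G) = ⊤) (r : ℕ) :
    (wordBall (S : Set G) r).Finite := by
  have hK : ((S : Set G) ∪ (S : Set G)⁻¹).Finite := (S.finite_toSet).union (S.finite_toSet.inv)
  apply Set.Finite.subset ((finite_lists _ hK r).image List.prod)
  intro g hg
  obtain ⟨l, hlen, hm, hp⟩ := wordLength_spec hgen g
  exact ⟨l, ⟨hlen ▸ hg, hm⟩, hp⟩

/-- Split a cone-type element at radius `r`. -/
lemma exists_prefix (hgen : Subgroup.closure (S : Set G) = ⊤) (g u : G)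
    (hu : u ∈ coneType (S : Set G) g) {r : ℕ} (hr : r ≤ wordLength (S : Set G) u) :
    ∃ v : G, wordLength (S : Set G) v = r ∧ v ∈ coneType (S : Set G) g ∧
      v⁻¹ * u ∈ coneType (S : Set G) (g * v) ∧
      wordLength (S : Set G) (v⁻¹ * u) = wordLength (S : Set G) u - r := by
  obtain ⟨l, hlen, hm, hp⟩ := wordLength_spec hgen u
  set v := (l.take r).prod with hv
  set w := (l.drop r).prod with hw
  have hvw : v * w = u := by rw [hv, hw, ← List.prod_append, List.take_append_drop, hp]
  have hlv : wordLength (S : Set G) v ≤ r := by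
    have := wordLength_le (g := v) (l := l.take r)
      (fun x hx => hm x (List.mem_of_mem_take hx)) rfl
    simpa [List.length_take, hlen, Nat.min_eq_left hr] using this
  have hlw : wordLength (S : Set G) w ≤ wordLength (S : Set G) u - r := by
    have := wordLength_le (g := w) (l := l.drop r)
      (fun x hx => hm x (List.mem_of_mem_drop hx)) rfl
    simpa [List.length_drop, hlen] using this
  -- wordLength u ≤ wordLength v + wordLength w
  have hmul : ∀ a b : G, wordLength (S : Set G) (a * b) ≤
      wordLength (S : Set G) a + wordLength (S : Set G) b := wordLength_mul_le hgen
  have hsub : wordLength (S : Set G) u ≤ wordLength (S : Set G) v + wordLength (S : Set G) w := by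
    rw [← hvw]; exact hmul v w
  have hvr : wordLength (S : Set G) v = r := by omega
  have hwr : wordLength (S : Set G) w = wordLength (S : Set G) u - r := by omega
  -- v is in the cone type of g
  have hgu : wordLength (S : Set G) (g * u) =
      wordLength (S : Set G) g + wordLength (S : Set G) u := hu
  have h1 : wordLength (S : Set G) (g * v) ≤ wordLength (S : Set G) g + r := by
    have := hmul g v; omega
  have h2 : wordLength (S : Set G) (g * u) ≤
      wordLength (S : Set G) (g * v) + wordLength (S : Set G) w := by
    have := hmul (g * v) w
    rw [mul_assoc, hvw] at this; exact this
  have h3 : wordLength (S : Set G) (g * v) = wordLength (S : Set G) g + r := by omega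
  refine ⟨v, hvr, ?_, ?_, ?_⟩
  · show wordLength (S : Set G) (g * v) = _
    rw [h3, hvr]
  · show wordLength (S : Set G) (g * v * (v⁻¹ * u)) = _
    have : g * v * (v⁻¹ * u) = g * u := by group
    rw [this, hgu, h3]
    have : v⁻¹ * u = w := by rw [← hvw]; group
    rw [this, hwr]
    omega
  · have : v⁻¹ * u = w := by rw [← hvw]; group
    rw [this, hwr]

lemma counting_step (hgen : Subgroup.closure (S : Set G) = ⊤)
    (lam α : ℝ) (hlam : 1 < lam) (hα : 1 ≤ α)
    (hcoo₂ : ∀ r : ℕ, ((wordBall (S : Set G) r).ncard : ℝ) ≤ α * lam ^ r)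
    (g : G) (a : ℝ) (ha : 0 < a) (r s : ℕ) (hrs : r ≤ s)
    (hbig : a * lam ^ s ≤ ((coneType (S : Set G) g ∩ wordBall (S : Set G) s).ncard : ℝ))
    (hgap : 2 * α * lam ^ r ≤ a * lam ^ s) :
    (a / (4 * α)) * lam ^ r ≤
      (({v : G | wordLength (S : Set G) v = r ∧ v ∈ coneType (S : Set G) g ∧
        (a / (4 * α)) * lam ^ (s - r) ≤
          ((coneType (S : Set G) (g * v) ∩ wordBall (S : Set G) (s - r)).ncard : ℝ)}).ncard : ℝ) := by
  classical
  set ℓ := wordLength (S : Set G) with hℓ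
  set c : ℝ := a / (4 * α) with hc
  have hα0 : (0 : ℝ) < α := lt_of_lt_of_le one_pos hα
  have hc0 : 0 < c := div_pos ha (by linarith)
  have hlam0 : (0 : ℝ) < lam := lt_trans one_pos hlam
  set B : ℕ → Finset G := fun n => (wordBall_finite hgen n).toFinset with hB
  have hBmem : ∀ (n : ℕ) (x : G), x ∈ B n ↔ ℓ x ≤ n := by
    intro n x; simp only [hB, Set.Finite.mem_toFinset]; rfl
  have hBcard : ∀ n, ((B n).card : ℝ) ≤ α * lam ^ n := by
    intro n
    have h1 := hcoo₂ n
    rwa [Set.ncard_eq_toFinset_card _ (wordBall_finite hgen n)] at h1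
  -- Finsets for cone-type intersections
  set D : G → ℕ → Finset G := fun x n => (B n).filter (· ∈ coneType (S : Set G) x) with hD
  have hDset : ∀ (x : G) (n : ℕ),
      coneType (S : Set G) x ∩ wordBall (S : Set G) n = ↑(D x n) := by
    intro x n
    ext y
    simp only [hD, Finset.coe_filter, Set.mem_setOf_eq, Set.mem_inter_iff, hBmem]
    constructor
    · rintro ⟨h1, h2⟩; exact ⟨h2, h1⟩
    · rintro ⟨h1, h2⟩; exact ⟨h2, h1⟩
  have hDcard : ∀ (x : G) (n : ℕ),
      ((coneType (S : Set G) x ∩ wordBall (S : Set G) n).ncard : ℝ) = ((D x n).card : ℝ) := by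
    intro x n; rw [hDset, Set.ncard_coe_finset]
  have hDle : ∀ (x : G) (n : ℕ), ((D x n).card : ℝ) ≤ α * lam ^ n := by
    intro x n
    refine le_trans ?_ (hBcard n)
    exact_mod_cast Nat.cast_le.mpr (Finset.card_le_card (Finset.filter_subset _ _))
  -- the main finset F and its size
  set F : Finset G := (D g s).filter (fun u => r ≤ ℓ u) with hF
  have hCBcard : a * lam ^ s ≤ ((D g s).card : ℝ) := by rw [← hDcard]; exact hbig
  have hsplit : (D g s).card = F.card + ((D g s).filter (fun u => ¬ r ≤ ℓ u)).card :=
    (Finset.card_filter_add_card_filter_not _).symm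
  have hsmall : (((D g s).filter (fun u => ¬ r ≤ ℓ u)).card : ℝ) ≤ α * lam ^ r := by
    refine le_trans ?_ (hBcard r)
    refine Nat.cast_le.mpr (Finset.card_le_card ?_)
    intro x hx
    simp only [Finset.mem_filter, hD, not_le] at hx
    exact (hBmem r x).mpr (le_of_lt hx.2)
  have hFbig : a * lam ^ s - α * lam ^ r ≤ (F.card : ℝ) := by
    have := hCBcard
    have h2 : ((D g s).card : ℝ) = (F.card : ℝ) + (((D g s).filter (fun u => ¬ r ≤ ℓ u)).card : ℝ) := by
      exact_mod_cast congrArg (Nat.cast (R := ℝ)) hsplit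
    linarith
  -- prefix map
  set pr : G → G := fun u =>
    if h : ∃ v : G, ℓ v = r ∧ v ∈ coneType (S : Set G) g ∧
        v⁻¹ * u ∈ coneType (S : Set G) (g * v) ∧ ℓ (v⁻¹ * u) = ℓ u - r
    then h.choose else 1 with hpr
  have hprspec : ∀ u ∈ F, ℓ (pr u) = r ∧ pr u ∈ coneType (S : Set G) g ∧
      (pr u)⁻¹ * u ∈ coneType (S : Set G) (g * pr u) ∧ ℓ ((pr u)⁻¹ * u) = ℓ u - r := by
    intro u hu
    simp only [hF, hD, Finset.mem_filter] at hu
    have hex : ∃ v : G, ℓ v = r ∧ v ∈ coneType (S : Set G) g ∧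
        v⁻¹ * u ∈ coneType (S : Set G) (g * v) ∧ ℓ (v⁻¹ * u) = ℓ u - r :=
      exists_prefix hgen g u hu.1.2 hu.2
    simp only [hpr, dif_pos hex]
    exact hex.choose_spec
  set W : Finset G := (B r).filter (fun v => ℓ v = r ∧ v ∈ coneType (S : Set G) g) with hW
  have hprW : ∀ u ∈ F, pr u ∈ W := by
    intro u hu
    obtain ⟨h1, h2, -, -⟩ := hprspec u hu
    simp only [hW, Finset.mem_filter]
    exact ⟨(hBmem r _).mpr h1.le, h1, h2⟩
  have hWcard : (W.card : ℝ) ≤ α * lam ^ r :=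
    le_trans (Nat.cast_le.mpr (Finset.card_le_card (Finset.filter_subset _ _))) (hBcard r)
  have hfib : F.card = ∑ v ∈ W, (F.filter (fun u => pr u = v)).card :=
    Finset.card_eq_sum_card_fiberwise hprW
  have hfibbound : ∀ v ∈ W, ((F.filter (fun u => pr u = v)).card : ℝ) ≤ ((D (g * v) (s - r)).card : ℝ) := by
    intro v hv
    refine Nat.cast_le.mpr (Finset.card_le_card_of_injOn (fun u => v⁻¹ * u) ?_ ?_)
    · intro u hu
      simp only [Finset.mem_coe, Finset.mem_filter] at hu
      obtain ⟨huF, hprv⟩ := hu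
      obtain ⟨-, -, h3, h4⟩ := hprspec u huF
      rw [hprv] at h3 h4
      simp only [hD, Finset.mem_coe, Finset.mem_filter]
      refine ⟨(hBmem _ _).mpr ?_, h3⟩
      rw [h4]
      simp only [hF, hD, Finset.mem_filter, hBmem] at huF
      omega
    · intro x _ y _ hxy
      exact mul_left_cancel hxy
  -- good vertices
  set badP : G → Prop := fun v => ¬ (c * lam ^ (s - r) ≤ ((coneType (S : Set G) (g * v) ∩ wordBall (S : Set G) (s - r)).ncard : ℝ)) with hbadP
  set Good : Finset G := W.filter
    (fun v => c * lam ^ (s - r) ≤ ((coneType (S : Set G) (g * v) ∩ wordBall (S : Set G) (s - r)).ncard : ℝ)) with hGood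
  have hsum : ((F.card : ℕ) : ℝ) = ∑ v ∈ Good, ((F.filter (fun u => pr u = v)).card : ℝ)
      + ∑ v ∈ W.filter badP, ((F.filter (fun u => pr u = v)).card : ℝ) := by
    rw [hfib]
    push_cast
    rw [hGood]
    exact (Finset.sum_filter_add_sum_filter_not W _ _).symm
  have hgoodsum : ∑ v ∈ Good, ((F.filter (fun u => pr u = v)).card : ℝ)
      ≤ (Good.card : ℝ) * (α * lam ^ (s - r)) := by
    rw [← nsmul_eq_mul]
    refine Finset.sum_le_card_nsmul _ _ _ ?_
    intro v hv
    exact le_trans (hfibbound v (Finset.mem_filter.mp hv).1) (hDle _ _)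
  have hbadsum : ∑ v ∈ W.filter badP,
        ((F.filter (fun u => pr u = v)).card : ℝ) ≤ (W.card : ℝ) * (c * lam ^ (s - r)) := by
    calc _ ≤ ((W.filter badP).card : ℝ) * (c * lam ^ (s - r)) := by
          rw [← nsmul_eq_mul]
          refine Finset.sum_le_card_nsmul _ _ _ ?_
          intro v hv
          simp only [Finset.mem_filter, hbadP, not_le] at hv
          refine le_trans (hfibbound v hv.1) ?_
          rw [← hDcard]
          exact (hv.2).le
      _ ≤ _ := by
          have h1 : (0:ℝ) ≤ c * lam ^ (s - r) := le_of_lt (mul_pos hc0 (pow_pos hlam0 _))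
          have h2 : ((W.filter badP).card : ℝ) ≤ (W.card : ℝ) :=
            Nat.cast_le.mpr (Finset.card_le_card (Finset.filter_subset _ _))
          exact mul_le_mul_of_nonneg_right h2 h1
  -- arithmetic
  have hpow : lam ^ s = lam ^ r * lam ^ (s - r) := by
    rw [← pow_add]
    congr 1
    omega
  have hGoodcard : c * lam ^ r ≤ (Good.card : ℝ) := by
    set P := lam ^ (s - r) with hP
    set Q := lam ^ r with hQ
    have hP0 : (0:ℝ) < P := pow_pos hlam0 _
    have hQ0 : (0:ℝ) < Q := pow_pos hlam0 _
    have key : a * (Q * P) - α * Q ≤ (Good.card : ℝ) * (α * P) + (α * Q) * (c * P) := by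
      have h1 : a * (Q * P) - α * Q ≤ (F.card : ℝ) := by rw [← hpow]; exact hFbig
      have h2 : (W.card : ℝ) * (c * P) ≤ (α * Q) * (c * P) :=
        mul_le_mul_of_nonneg_right hWcard (le_of_lt (mul_pos hc0 hP0))
      linarith [hsum, hgoodsum, hbadsum]
    have hgap' : 2 * α * Q ≤ a * (Q * P) := by rw [← hpow]; exact hgap
    have hcy : (α * Q) * (c * P) = (a / 4) * (Q * P) := by
      rw [hc]; field_simp
    rw [hcy] at key
    -- now: a*(Q*P) - α*Q ≤ Good*(α*P) + (a/4)*(Q*P), α*Q ≤ (a/2)*(Q*P)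
    have h3 : (a / 4) * (Q * P) ≤ (Good.card : ℝ) * (α * P) := by linarith
    rw [hc, div_mul_eq_mul_div, div_le_iff₀ (by linarith : (0:ℝ) < 4 * α)]
    nlinarith [h3, hP0, hQ0, hα0]
  -- identify the set with Good
  have hsetEq : {v : G | ℓ v = r ∧ v ∈ coneType (S : Set G) g ∧
      c * lam ^ (s - r) ≤ ((coneType (S : Set G) (g * v) ∩ wordBall (S : Set G) (s - r)).ncard : ℝ)}
      = ↑Good := by
    ext v
    simp only [hGood, hW, Finset.coe_filter, Set.mem_setOf_eq, Finset.mem_filter, hBmem]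
    constructor
    · rintro ⟨h1, h2, h3⟩; exact ⟨⟨h1.le, h1, h2⟩, h3⟩
    · rintro ⟨⟨-, h1, h2⟩, h3⟩; exact ⟨h1, h2, h3⟩
  rw [hsetEq, Set.ncard_coe_finset]
  exact hGoodcard


end Helpers2

end MainHelpers

/-- There is `γ > 0` such that for every essential `g`, every `r ≥ 0` and every `e ≥ 1`, the
number of `u` in `T_g ∩ A(r,e)` with `gu` essential is at least `γ·λ^r`. -/
theorem growth_of_essential_extensions {G : Type*} [Group G] (S : Finset G)
    (hgen : Subgroup.closure (S : Set G) = ⊤) (lam α : ℝ) (hlam : 1 < lam) (hα : 1 ≤ α)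
    (hcoo₁ : ∀ r : ℕ, lam ^ r ≤ ((wordBall (S : Set G) r).ncard : ℝ))
    (hcoo₂ : ∀ r : ℕ, ((wordBall (S : Set G) r).ncard : ℝ) ≤ α * lam ^ r)
    (hfin : (Set.range (coneType (S : Set G))).Finite) :
    ∃ γ > (0 : ℝ), ∀ g : G, Essential (S : Set G) lam g → ∀ r e : ℕ, 1 ≤ e →
      γ * lam ^ r ≤
        (({u | u ∈ coneType (S : Set G) g ∩ wordAnn (S : Set G) r e ∧
            Essential (S : Set G) lam (g * u)}).ncard : ℝ) := by

  classical
  have hlam0 : (0 : ℝ) < lam := lt_trans one_pos hlam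
  have hα0 : (0 : ℝ) < α := lt_of_lt_of_le one_pos hα
  -- essentiality as a property of the cone type
  set EssP : Set G → Prop := fun T =>
    ∃ a > (0 : ℝ), ∀ r : ℕ, ∃ s ≥ r, a * lam ^ s ≤ ((T ∩ wordBall (S : Set G) s).ncard : ℝ)
    with hEssP
  -- a uniform constant for all essential cone types
  set aT : Set G → ℝ := fun T => if h : EssP T then min h.choose 1 else 1 with haT
  have haTpos : ∀ T, 0 < aT T := by
    intro T
    simp only [haT]
    by_cases h : EssP T
    · rw [dif_pos h]
      exact lt_min h.choose_spec.1 one_pos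
    · rw [dif_neg h]; exact one_pos
  have haTle1 : ∀ T, aT T ≤ 1 := by
    intro T
    simp only [haT]
    by_cases h : EssP T
    · rw [dif_pos h]; exact min_le_right _ _
    · rw [dif_neg h]
  have haTspec : ∀ T, EssP T →
      ∀ r : ℕ, ∃ s ≥ r, aT T * lam ^ s ≤ ((T ∩ wordBall (S : Set G) s).ncard : ℝ) := by
    intro T h r
    obtain ⟨s, hs, hb⟩ := h.choose_spec.2 r
    refine ⟨s, hs, le_trans ?_ hb⟩
    have : aT T ≤ h.choose := by simp only [haT, dif_pos h]; exact min_le_left _ _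
    exact mul_le_mul_of_nonneg_right this (pow_pos hlam0 s).le
  set ET : Finset (Set G) := hfin.toFinset.filter EssP with hET
  set a : ℝ := ∏ T ∈ ET, aT T with ha
  have ha0 : 0 < a := Finset.prod_pos (fun T _ => haTpos T)
  have haleT : ∀ T ∈ ET, a ≤ aT T := by
    intro T hT
    rw [ha, ← Finset.mul_prod_erase _ _ hT]
    have h1 : ∏ x ∈ ET.erase T, aT x ≤ 1 :=
      Finset.prod_le_one (fun x _ => (haTpos x).le) (fun x _ => haTle1 x)
    exact mul_le_of_le_one_right (haTpos T).le h1
  -- the uniform essential lower bound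
  have hunif : ∀ g : G, Essential (S : Set G) lam g → ∀ r : ℕ, ∃ s ≥ r,
      a * lam ^ s ≤ ((coneType (S : Set G) g ∩ wordBall (S : Set G) s).ncard : ℝ) := by
    intro g hg r
    have hT : EssP (coneType (S : Set G) g) := hg
    have hmem : coneType (S : Set G) g ∈ ET := by
      rw [hET, Finset.mem_filter, Set.Finite.mem_toFinset]
      exact ⟨Set.mem_range_self g, hT⟩
    obtain ⟨s, hs, hb⟩ := haTspec _ hT r
    exact ⟨s, hs, le_trans
      (mul_le_mul_of_nonneg_right (haleT _ hmem) (pow_pos hlam0 s).le) hb⟩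
  set c : ℝ := a / (4 * α) with hc
  have hc0 : 0 < c := div_pos ha0 (by linarith)
  refine ⟨c, hc0, ?_⟩
  intro g hg r e _he
  obtain ⟨n₀, hn₀⟩ := pow_unbounded_of_one_lt (2 * α / a) hlam
  have hseq : ∀ m : ℕ, ∃ s, m + (r + n₀) ≤ s ∧
      a * lam ^ s ≤ ((coneType (S : Set G) g ∩ wordBall (S : Set G) s).ncard : ℝ) := by
    intro m
    obtain ⟨s, hs, hb⟩ := hunif g hg (m + (r + n₀))
    exact ⟨s, hs, hb⟩
  choose t ht₁ ht₂ using hseq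
  -- the "good prefix" sets
  set GS : ℕ → Set G := fun s => {v : G | wordLength (S : Set G) v = r ∧
      v ∈ coneType (S : Set G) g ∧ c * lam ^ (s - r) ≤
        ((coneType (S : Set G) (g * v) ∩ wordBall (S : Set G) (s - r)).ncard : ℝ)} with hGS
  have hGSfin : ∀ s, (GS s).Finite := by
    intro s
    apply (wordBall_finite hgen r).subset
    intro v hv
    exact hv.1.le
  have hGSbound : ∀ m : ℕ, c * lam ^ r ≤ ((GS (t m)).ncard : ℝ) := by
    intro m
    have hrs : r ≤ t m := le_trans (by omega) (ht₁ m)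
    have hgap : 2 * α * lam ^ r ≤ a * lam ^ (t m) := by
      have h1 : lam ^ (r + n₀) ≤ lam ^ (t m) :=
        pow_le_pow_right₀ hlam.le (le_trans (by omega) (ht₁ m))
      have h2 : 2 * α / a < lam ^ n₀ := hn₀
      have h3 : 2 * α < a * lam ^ n₀ := by
        rwa [div_lt_iff₀ ha0, mul_comm (lam ^ n₀) a] at h2
      have h4 : 2 * α * lam ^ r ≤ a * lam ^ n₀ * lam ^ r :=
        mul_le_mul_of_nonneg_right h3.le (pow_pos hlam0 r).le
      calc 2 * α * lam ^ r ≤ a * lam ^ n₀ * lam ^ r := h4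
        _ = a * lam ^ (r + n₀) := by rw [pow_add]; ring
        _ ≤ a * lam ^ (t m) := mul_le_mul_of_nonneg_left h1 ha0.le
    exact counting_step hgen lam α hlam hα hcoo₂ g a ha0 r (t m) hrs (ht₂ m) hgap
  -- pigeonhole over the finitely many subsets of the ball
  set f : ℕ → {A : Finset G // A ∈ (wordBall_finite hgen r).toFinset.powerset} := fun m =>
    ⟨(hGSfin (t m)).toFinset, by
      rw [Finset.mem_powerset]
      intro v hv
      rw [Set.Finite.mem_toFinset] at hv ⊢
      exact hv.1.le⟩ with hf
  obtain ⟨V, hV⟩ := Finite.exists_infinite_fiber f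
  have hM : {m : ℕ | f m = V}.Infinite := Set.infinite_coe_iff.mp hV
  obtain ⟨m₀, hm₀⟩ := hM.nonempty
  -- membership in the target set
  have hsub : GS (t m₀) ⊆ {u | u ∈ coneType (S : Set G) g ∩ wordAnn (S : Set G) r e ∧
      Essential (S : Set G) lam (g * u)} := by
    intro v hv
    obtain ⟨hv1, hv2, _hv3⟩ := hv
    refine ⟨⟨hv2, ?_, ?_⟩, ?_⟩
    · rw [hv1]; exact Nat.sub_le r e
    · rw [hv1]
    · refine ⟨c, hc0, ?_⟩
      intro r'
      obtain ⟨m, hmM, hmr'⟩ := hM.exists_notMem_finite (Set.finite_Iic r')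
      have hmr : r' < m := by simpa using hmr'
      have hveq : v ∈ GS (t m) := by
        have h1 : (hGSfin (t m)).toFinset = (hGSfin (t m₀)).toFinset := by
          have := hmM.trans hm₀.symm
          exact congrArg Subtype.val this
        have h2 : v ∈ (hGSfin (t m₀)).toFinset := (Set.Finite.mem_toFinset _).mpr ⟨hv1, hv2, _hv3⟩
        rw [← h1, Set.Finite.mem_toFinset] at h2
        exact h2
      refine ⟨t m - r, ?_, ?_⟩
      · have := ht₁ m; omega
      · exact hveq.2.2
  have hXfin : ({u | u ∈ coneType (S : Set G) g ∩ wordAnn (S : Set G) r e ∧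
      Essential (S : Set G) lam (g * u)} : Set G).Finite := by
    apply (wordBall_finite hgen r).subset
    intro u hu
    exact hu.1.2.2
  calc c * lam ^ r ≤ ((GS (t m₀)).ncard : ℝ) := hGSbound m₀
    _ ≤ _ := by exact_mod_cast Nat.cast_le.mpr (Set.ncard_le_ncard hsub hXfin)
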